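/- arXiv:2501.15135 — 6 statements merged into one kernel-verified Lean document; each statement's English description precedes it below -/
import Mathlib

section
/- For the morphisms f and φ on words (f: 0→01, 1→022, 2→02 over {0,1,2}; φ: 0→01, 1→02, 2→03, 3→04, 4→044 over {0,1,2,3,4}) and the morphism ψ: {0,1,2,3,4}* → {0,1,2}* given by 0→0, 1→1, 2→22, 3→202, 4→20102, one has f ∘ ψ = ψ ∘ φ as monoid homomorphisms. -/
/-- letter images of the morphism f: 0→01, 1→022, 2→02 -/
def fm : Fin 3 → List (Fin 3) := ![[0,1],[0,2,2],[0,2]]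
/-- the morphism f on words -/
def f (w : List (Fin 3)) : List (Fin 3) := w.flatMap fm

/-- letter images of φ: 0→01, 1→02, 2→03, 3→04, 4→044 -/
def phim : Fin 5 → List (Fin 5) := ![[0,1],[0,2],[0,3],[0,4],[0,4,4]]
/-- the morphism φ on words -/
def phi (w : List (Fin 5)) : List (Fin 5) := w.flatMap phim

/-- letter images of ψ: 0→0, 1→1, 2→22, 3→202, 4→20102 -/
def psim : Fin 5 → List (Fin 3) := ![[0],[1],[2,2],[2,0,2],[2,0,1,0,2]]
/-- the morphism ψ on words -/
def psi (w : List (Fin 5)) : List (Fin 3) := w.flatMap psim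

/-- letter images of g: 0→20, 1→21, 2→2 -/
def gm : Fin 3 → List (Fin 3) := ![[2,0],[2,1],[2]]
/-- the morphism g on words -/
def g (w : List (Fin 3)) : List (Fin 3) := w.flatMap gm

def A : List (Fin 3) := [0,0,1,0,1,1,0,1]
def B : List (Fin 3) := [0,0,1]
def C : List (Fin 3) := [0,0,2,0,2,2,0,2]
def D : List (Fin 3) := [0,0,2]

/-- letter images of ξ: 0→A, 1→AD, 2→AC, 3→ACC, 4→ACCBCC -/
def xim : Fin 5 → List (Fin 3) := ![A, A++D, A++C, A++C++C, A++C++C++B++C++C]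
/-- the morphism ξ on words -/
def xi (w : List (Fin 5)) : List (Fin 3) := w.flatMap xim

/-- the antimorphism S: reversal composed with the exchange 1↔2 (0 fixed) -/
def S (w : List (Fin 3)) : List (Fin 3) := (w.map ![0,2,1]).reverse

/-- f ∘ ψ = ψ ∘ φ as monoid homomorphisms. -/
theorem stmt0 : ∀ w : List (Fin 5), f (psi w) = psi (phi w) := by
  intro w
  induction w with
  | nil => rfl
  | cons a t ih =>
    show f (psim a ++ psi t) = psi (phim a ++ phi t)
    simp only [f, psi, phi, List.flatMap_append]
    exact congrArg₂ (· ++ ·) (by fin_cases a <;> rfl) ih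
end

section
/- For every natural number n, f^n ∘ ψ = ψ ∘ φ^n, where f, φ, ψ are the morphisms defined by f(0)=01, f(1)=022, f(2)=02; φ(0)=01, φ(1)=02, φ(2)=03, φ(3)=04, φ(4)=044; ψ(0)=0, ψ(1)=1, ψ(2)=22, ψ(3)=202, ψ(4)=20102. -/
lemma f_append (u v : List (Fin 3)) : f (u ++ v) = f u ++ f v := List.flatMap_append (xs := u) (ys := v) (f := fm)
lemma psi_append (u v : List (Fin 5)) : psi (u ++ v) = psi u ++ psi v := List.flatMap_append (xs := u) (ys := v) (f := psim)

lemma key (w : List (Fin 5)) : f (psi w) = psi (phi w) := by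
  induction w with
  | nil => rfl
  | cons a t ih =>
    have : f (psi (a :: t)) = f (psi [a]) ++ f (psi t) := by
      rw [show (a :: t) = [a] ++ t from rfl, psi_append, f_append]
    rw [this, ih]
    have h1 : f (psi [a]) = psi (phi [a]) := by fin_cases a <;> rfl
    rw [h1]
    rw [show (a :: t) = [a] ++ t from rfl]
    show _ = psi (phi ([a] ++ t))
    rw [show phi ([a] ++ t) = phi [a] ++ phi t from List.flatMap_append, psi_append]

/-- f^n ∘ ψ = ψ ∘ φ^n for every n. -/
theorem stmt1 : ∀ n : ℕ, ∀ w : List (Fin 5), f^[n] (psi w) = psi (phi^[n] w) := by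
  intro n
  induction n with
  | zero => intro w; rfl
  | succ n ih =>
    intro w
    rw [Function.iterate_succ_apply', Function.iterate_succ_apply', ih, key]
end

section
/- For every k ∈ ℕ, the word x_k = ξ(φ^k(2))·00 is an S-palindrome, where φ(0)=01, φ(1)=02, φ(2)=03, φ(3)=04, φ(4)=044, ξ(0)=A, ξ(1)=AD, ξ(2)=AC, ξ(3)=ACC, ξ(4)=ACCBCC with A=00101101, B=001, C=00202202, D=002, and S is the antimorphism fixing 0 and exchanging 1↔2. -/

lemma S_append (u v : List (Fin 3)) : S (u ++ v) = S v ++ S u := by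
  simp [S]

lemma xi_append (u v : List (Fin 5)) : xi (u ++ v) = xi u ++ xi v := by
  simp [xi]

lemma phi_append (u v : List (Fin 5)) : phi (u ++ v) = phi u ++ phi v := by
  simp [phi]

lemma phik_append (k : ℕ) (u v : List (Fin 5)) :
    phi^[k] (u ++ v) = phi^[k] u ++ phi^[k] v := by
  induction k generalizing u v with
  | zero => rfl
  | succ n ih =>
    rw [Function.iterate_succ_apply, Function.iterate_succ_apply, Function.iterate_succ_apply,
      phi_append, ih]

lemma U_succ (k : ℕ) (a : Fin 5) :
    xi (phi^[k + 1] [a]) = xi (phi^[k] [0] ++ phi^[k] (phim a).tail) := by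
  rw [Function.iterate_succ_apply]
  have h : phi [a] = [0] ++ (phim a).tail := by
    fin_cases a <;> rfl
  rw [h, phik_append]

lemma main (k : ℕ) :
    (xi (phi^[k] [2]) ++ [0,0] = [0,0] ++ S (xi (phi^[k] [2]))) ∧
    (xi (phi^[k] [3]) ++ [0,0] = [0,0] ++ (S (xi (phi^[k] [2])) ++ S (xi (phi^[k] [0])))) ∧
    (xi (phi^[k] [4]) ++ [0,0] = [0,0] ++ (S (xi (phi^[k] [2])) ++ (S (xi (phi^[k] [0])) ++
      (S (xi (phi^[k] [1])) ++ S (xi (phi^[k] [0])))))) := by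
  induction k with
  | zero => refine ⟨by decide, by decide, by decide⟩
  | succ n ih =>
    obtain ⟨h2, h3, h4⟩ := ih
    set u0 := xi (phi^[n] [0]) with hu0
    set u1 := xi (phi^[n] [1]) with hu1
    set u2 := xi (phi^[n] [2]) with hu2
    set u3 := xi (phi^[n] [3]) with hu3
    set u4 := xi (phi^[n] [4]) with hu4
    set Z : List (Fin 3) := [0,0] with hZ
    have h4x : ∀ x : List (Fin 3), u4 ++ (Z ++ x) =
        Z ++ (S u2 ++ (S u0 ++ (S u1 ++ (S u0 ++ x)))) := by
      intro x
      have := congrArg (· ++ x) h4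
      simpa [List.append_assoc] using this
    have h2x : ∀ x : List (Fin 3), u2 ++ (Z ++ x) = Z ++ (S u2 ++ x) := by
      intro x
      have := congrArg (· ++ x) h2
      simpa [List.append_assoc] using this
    have SZ : S Z = Z := by decide
    have SS : ∀ w : List (Fin 3), S (S w) = w := by
      intro w
      simp only [S, List.map_reverse, List.reverse_reverse, List.map_map]
      have : (![0,2,1] : Fin 3 → Fin 3) ∘ ![0,2,1] = id := by decide
      rw [this, List.map_id]
    have L' : u0 ++ (u2 ++ Z) = Z ++ S u3 := by
      have := congrArg S h3.symm
      simp only [S_append, SS, SZ] at this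
      simpa [List.append_assoc] using this
    have L'x : ∀ x : List (Fin 3), u0 ++ (u2 ++ (Z ++ x)) = Z ++ (S u3 ++ x) := by
      intro x
      have := congrArg (· ++ x) L'
      simpa [List.append_assoc] using this
    have e0 : xi (phi^[n+1] [0]) = u0 ++ u1 := by rw [U_succ, xi_append]; rfl
    have e1 : xi (phi^[n+1] [1]) = u0 ++ u2 := by rw [U_succ, xi_append]; rfl
    have e2 : xi (phi^[n+1] [2]) = u0 ++ u3 := by rw [U_succ, xi_append]; rfl
    have e3 : xi (phi^[n+1] [3]) = u0 ++ u4 := by rw [U_succ, xi_append]; rfl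
    have e4 : xi (phi^[n+1] [4]) = u0 ++ (u4 ++ u4) := by
      rw [U_succ]
      have : phi^[n] (phim 4).tail = phi^[n] ([4] ++ [4]) := rfl
      rw [this, phik_append, xi_append, xi_append]
    have G3 : xi (phi^[n+1] [3]) ++ Z = Z ++ (S u3 ++ (S u0 ++ (S u1 ++ S u0))) := by
      rw [e3]
      simp only [List.append_assoc]
      rw [h4, ← h2x, L'x]
    refine ⟨?_, ?_, ?_⟩
    · rw [e2, S_append]
      simp only [List.append_assoc]
      rw [h3, ← h2x, L'x]
    · rw [G3, e2, e0, S_append, S_append]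
      simp only [List.append_assoc]
    · rw [e4, e2, e0, e1, S_append, S_append, S_append]
      simp only [List.append_assoc]
      rw [h4, h4x, ← h2x, L'x]

/-- for every k, ξ(φ^k(2))·00 is an S-palindrome. -/
theorem stmt9 : ∀ k : ℕ, S (xi (phi^[k] [2]) ++ [0,0]) = xi (phi^[k] [2]) ++ [0,0] := by
  intro k
  have h := (main k).1
  rw [S_append, show S [0,0] = ([0,0] : List (Fin 3)) by decide, ← h]
end

section
/- Let E be the antimorphism on {0,1}* mapping a word to its reversal with letters 0 and 1 exchanged. Every word w over {0,1} that is E-rich (i.e., every factor of w contains the maximal possible number of distinct E-palindromic factors) is a factor of the periodic sequence (01)^ω. In particular: if w is a binary word all of whose factors u satisfy that the number of distinct E-palindromic factors of u equals ⌊|u|/2⌋ + 1, then w is a factor of the sequence 010101⋯. -/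
/-- the antimorphism E on binary words: reversal with letters exchanged -/
def E (w : List (Fin 2)) : List (Fin 2) := (w.map ![1,0]).reverse

/-- the alternating word of length n starting with a -/
def alt : Fin 2 → ℕ → List (Fin 2)
  | _, 0 => []
  | a, n+1 => a :: alt (1-a) n

lemma key_s13 (a : Fin 2) : {p : List (Fin 2) | p <:+: [a,a] ∧ E p = p}.ncard = 1 := by
  have h : {p : List (Fin 2) | p <:+: [a,a] ∧ E p = p} = {[]} := by
    ext p
    constructor
    · rintro ⟨hinf, hpal⟩
      have hs := hinf.sublist
      rcases p with _ | ⟨x, _ | ⟨y, _ | ⟨z, t⟩⟩⟩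
      · rfl
      · have hx : x = a := by
          have := hs.subset (List.mem_singleton.mpr rfl)
          simpa using this
        rw [hx] at hpal
        exfalso
        simp [E] at hpal
        fin_cases a <;> simp_all
      · have he : ([x,y] : List (Fin 2)) = [a,a] := hs.eq_of_length rfl
        rw [he] at hpal
        exfalso
        simp [E] at hpal
        fin_cases a <;> simp_all
      · exfalso
        have := hs.length_le
        simp at this
    · rintro rfl
      exact ⟨List.nil_infix, rfl⟩
  rw [h]
  exact Set.ncard_singleton _

lemma chain_eq_alt : ∀ (w : List (Fin 2)) (a : Fin 2), w.Chain' (· ≠ ·) →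
    w.head? = some a → w = alt a w.length := by
  intro w
  induction w with
  | nil => intro a _ h; simp at h
  | cons x t ih =>
    intro a hc hh
    simp at hh
    subst hh
    show _ = x :: alt (1-x) t.length
    match t, hc with
    | [], _ => rfl
    | b :: t', hc =>
      simp only [List.Chain'] at hc
      rw [List.isChain_cons_cons] at hc
      have hb : b = 1 - x := by
        have := hc.1
        fin_cases x <;> fin_cases b <;> simp_all
      congr 1
      rw [← hb]
      exact ih b hc.2 rfl

lemma alt_zero_even : ∀ n, alt 0 (2*n) = (List.replicate n ([0,1] : List (Fin 2))).flatten := by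
  intro n
  induction n with
  | zero => rfl
  | succ k ih =>
    have h2 : 2 * (k+1) = (2*k) + 1 + 1 := by ring
    rw [h2]
    show (0 : Fin 2) :: (1-0 : Fin 2) :: alt (1-(1-0)) (2*k) = _
    norm_num
    rw [ih]
    simp [List.replicate_succ]

lemma alt_prefix_mono : ∀ (m n : ℕ) (a : Fin 2), n ≤ m → alt a n <+: alt a m := by
  intro m
  induction m with
  | zero => intro n a h; interval_cases n; exact List.prefix_refl _
  | succ k ih =>
    intro n a h
    match n with
    | 0 => exact List.nil_prefix
    | j+1 =>
      show a :: alt (1-a) j <+: a :: alt (1-a) k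
      exact List.cons_prefix_cons.mpr ⟨rfl, ih j (1-a) (by omega)⟩

/-- every E-rich binary word is a factor of (01)^ω. -/
theorem stmt13 : ∀ w : List (Fin 2),
    (∀ u : List (Fin 2), u <:+: w →
      {p : List (Fin 2) | p <:+: u ∧ E p = p}.ncard = u.length / 2 + 1) →
    ∃ n : ℕ, w <:+: (List.replicate n ([0,1] : List (Fin 2))).flatten := by
  intro w H
  -- every factor of w (in particular w itself) has no two adjacent equal letters
  have hchain : ∀ v : List (Fin 2), v <:+: w → v.Chain' (· ≠ ·) := by
    intro v
    induction v with
    | nil => intro _; simp [List.Chain']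
    | cons x t ih =>
      intro hv
      have ht : t <:+: w := (List.suffix_cons x t).isInfix.trans hv
      cases t with
      | nil => simp [List.Chain']
      | cons b t' =>
        simp only [List.Chain']
        rw [List.isChain_cons_cons]
        refine ⟨?_, ih ht⟩
        intro heq
        have hinf : [x, x] <:+: w := by
          have hpre : [x, x] <+: x :: b :: t' := by
            rw [← heq]; exact ⟨t', rfl⟩
          exact hpre.isInfix.trans hv
        have := H [x,x] hinf
        rw [key_s13 x] at this
        simp at this
  have hc : w.Chain' (· ≠ ·) := hchain w (List.infix_refl w)
  match w, hc with
  | [], _ => exact ⟨0, List.nil_infix⟩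
  | x :: t, hc =>
    have halt : x :: t = alt x (x :: t).length := chain_eq_alt (x :: t) x hc rfl
    set L := (x :: t).length with hL
    refine ⟨L + 1, ?_⟩
    have hkey : alt x L <:+: alt 0 (2 * (L+1)) := by
      fin_cases x
      · exact (alt_prefix_mono (2*(L+1)) L 0 (by omega)).isInfix
      · have h1 : alt 0 (L+1) = 0 :: alt 1 L := rfl
        have h2 : alt 1 L <:+ alt 0 (L+1) := by rw [h1]; exact List.suffix_cons _ _
        exact h2.isInfix.trans (alt_prefix_mono (2*(L+1)) (L+1) 0 (by omega)).isInfix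
    rw [halt]
    rw [alt_zero_even] at hkey
    exact hkey
end

section
/- A word u over any alphabet of length n contains at most n+1 distinct palindromic factors (including the empty word). -/
open List

lemma pal_finite {α : Type*} (u : List α) :
    {p : List α | p <:+: u ∧ p.reverse = p}.Finite := by
  classical
  apply Set.Finite.subset u.sublists.toFinset.finite_toSet
  intro p hp
  simp only [List.coe_toFinset, Set.mem_setOf_eq, List.mem_sublists]
  exact hp.1.sublist

lemma pal_step {α : Type*} (u : List α) (a : α) :
    {p : List α | p <:+: u ++ [a] ∧ p.reverse = p}.ncard ≤
      {p : List α | p <:+: u ∧ p.reverse = p}.ncard + 1 := by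
  set PS : Set (List α) := {p | p <:+ u ++ [a] ∧ p.reverse = p} with hPS
  have hPSfin : PS.Finite := by
    apply (pal_finite (u ++ [a])).subset
    rintro p ⟨h1, h2⟩
    exact ⟨h1.isInfix, h2⟩
  have hne : PS.Nonempty := ⟨[], nil_suffix, rfl⟩
  obtain ⟨L, hL, hLmax⟩ := Set.exists_max_image PS List.length hPSfin hne
  have hsub : {p : List α | p <:+: u ++ [a] ∧ p.reverse = p} ⊆
      insert L {p : List α | p <:+: u ∧ p.reverse = p} := by
    rintro p ⟨hinf, hpal⟩
    obtain ⟨s, t, hst⟩ := hinf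
    rcases t.eq_nil_or_concat with rfl | ⟨t', b, rfl⟩
    · -- p is a suffix of u ++ [a]
      simp only [append_nil] at hst
      have hsuf : p <:+ u ++ [a] := ⟨s, hst⟩
      have hpPS : p ∈ PS := ⟨hsuf, hpal⟩
      by_cases hpe : p = L
      · exact Or.inl hpe
      · right
        have hlen : p.length ≤ L.length := hLmax p hpPS
        have hps : p <:+ L := suffix_of_suffix_length_le hsuf hL.1 hlen
        have hpp : p <+: L := by
          have := hps.reverse
          rwa [hpal, hL.2] at this
        have hlt : p.length < L.length := by
          rcases lt_or_eq_of_le hlen with h | h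
          · exact h
          · exact absurd (hpp.eq_of_length h) hpe
        -- L nonempty, L.dropLast is a suffix of u
        obtain ⟨L', c, rfl⟩ := L.eq_nil_or_concat.resolve_left (by
          rintro rfl; simp at hlt)
        simp only [concat_eq_append] at *
        obtain ⟨m, hm⟩ := hL.1
        rw [← append_assoc] at hm
        obtain ⟨hm1, hm2⟩ := append_inj' hm rfl
        have hpL' : p <+: L' := by
          rw [prefix_concat_iff] at hpp
          rcases hpp with rfl | h
          · simp at hlt
          · exact h
        have : L' <:+ u := ⟨m, hm1⟩
        exact ⟨hpL'.isInfix.trans this.isInfix, hpal⟩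
    · right
      simp only [concat_eq_append] at hst
      rw [← append_assoc] at hst
      obtain ⟨h1, h2⟩ := append_inj' hst rfl
      exact ⟨⟨s, t', h1⟩, hpal⟩
  calc {p : List α | p <:+: u ++ [a] ∧ p.reverse = p}.ncard
      ≤ (insert L {p : List α | p <:+: u ∧ p.reverse = p}).ncard :=
        Set.ncard_le_ncard hsub ((pal_finite u).insert L)
    _ ≤ _ := Set.ncard_insert_le _ _

/-- a word of length n has at most n+1 distinct palindromic factors. -/
theorem stmt14 {α : Type*} : ∀ u : List α,
    {p : List α | p <:+: u ∧ p.reverse = p}.ncard ≤ u.length + 1 := by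
  intro u
  induction u using List.reverseRecOn with
  | nil =>
    have : {p : List α | p <:+: ([] : List α) ∧ p.reverse = p} = {[]} := by
      ext p; simp (config := {contextual := true}) [List.infix_nil]
    rw [this]; simp
  | append_singleton u a ih =>
    calc {p : List α | p <:+: u ++ [a] ∧ p.reverse = p}.ncard
        ≤ {p : List α | p <:+: u ∧ p.reverse = p}.ncard + 1 := pal_step u a
      _ ≤ u.length + 1 + 1 := by omega
      _ = (u ++ [a]).length + 1 := by simp
end

section
/- If a finite word w of length n contains exactly n+1 distinct palindromic factors (i.e., w is rich), then every factor of w is also rich. -/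
namespace RichAux

variable {α : Type*}

/-- the set of palindromic factors of w -/
def P (w : List α) : Set (List α) := {p | p <:+: w ∧ p.reverse = p}

lemma P_finite (w : List α) : (P w).Finite := by
  apply Set.Finite.subset (w.sublists.finite_toSet)
  intro p hp
  simpa [List.mem_sublists] using hp.1.sublist

lemma P_nil : (P ([] : List α)) = {[]} := by
  ext p
  simp only [P, Set.mem_setOf_eq, Set.mem_singleton_iff, List.infix_nil]
  constructor
  · rintro ⟨h, -⟩; exact h
  · rintro rfl; exact ⟨rfl, rfl⟩

/-- if p is an infix of w ++ [a] but not of w, then it is a suffix of w ++ [a] -/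
lemma suffix_of_new {w p : List α} {a : α} (h : p <:+: w ++ [a]) (hn : ¬ p <:+: w) :
    p <:+ w ++ [a] := by
  obtain ⟨s, t, hst⟩ := h
  rcases t.eq_nil_or_concat with rfl | ⟨t', b, rfl⟩
  · exact ⟨s, by simpa using hst⟩
  · exfalso
    apply hn
    rw [List.concat_eq_append, ← List.append_assoc] at hst
    have := List.append_inj_left' hst (by simp)
    exact ⟨s, t', this⟩

/-- a new palindrome suffix that is a suffix of another new palindrome equals it -/
lemma new_eq_of_suffix {w p q : List α} {a : α}
    (hp : p ∈ P (w ++ [a]) \ P w) (hq : q ∈ P (w ++ [a]) \ P w)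
    (hpq : p <:+ q) : p = q := by
  obtain ⟨⟨hpi, hppal⟩, hpn⟩ := hp
  obtain ⟨⟨hqi, hqpal⟩, hqn⟩ := hq
  have hpnw : ¬ p <:+: w := fun h => hpn ⟨h, hppal⟩
  have hqnw : ¬ q <:+: w := fun h => hqn ⟨h, hqpal⟩
  have hqs : q <:+ w ++ [a] := suffix_of_new hqi hqnw
  -- p is a prefix of q since q is a palindrome and p is a palindromic suffix
  have hppre : p <+: q := by
    rw [← List.reverse_suffix, hppal, hqpal]
    exact hpq
  by_contra hne
  obtain ⟨r, hr⟩ := hppre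
  have hrne : r ≠ [] := by rintro rfl; exact hne (by simpa using hr)
  obtain ⟨r', b, rfl⟩ := r.eq_nil_or_concat.resolve_left hrne
  obtain ⟨s, hs⟩ := hqs
  apply hpnw
  rw [← hr, List.concat_eq_append, ← List.append_assoc, ← List.append_assoc] at hs
  have := List.append_inj_left' hs (by simp)
  exact ⟨s, r', this⟩

lemma step (w : List α) (a : α) : (P (w ++ [a])).ncard ≤ (P w).ncard + 1 := by
  have hsub : P (w ++ [a]) ⊆ P w ∪ (P (w ++ [a]) \ P w) := fun p hp => by
    by_cases h : p ∈ P w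
    · exact Or.inl h
    · exact Or.inr ⟨hp, h⟩
  calc (P (w ++ [a])).ncard ≤ (P w ∪ (P (w ++ [a]) \ P w)).ncard :=
        Set.ncard_le_ncard hsub ((P_finite w).union (P_finite _).diff)
    _ ≤ (P w).ncard + (P (w ++ [a]) \ P w).ncard := Set.ncard_union_le _ _
    _ ≤ (P w).ncard + 1 := by
        gcongr
        rw [Set.ncard_le_one ((P_finite (w ++ [a])).diff : (P (w ++ [a]) \ P w).Finite)]
        intro p hp q hq
        rcases List.suffix_or_suffix_of_suffix
            (suffix_of_new hp.1.1 (fun h => hp.2 ⟨h, hp.1.2⟩))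
            (suffix_of_new hq.1.1 (fun h => hq.2 ⟨h, hq.1.2⟩)) with h | h
        · exact new_eq_of_suffix hp hq h
        · exact (new_eq_of_suffix hq hp h).symm

lemma le_bound (t : List α) : ∀ w : List α, (P (w ++ t)).ncard ≤ (P w).ncard + t.length := by
  induction t using List.reverseRecOn with
  | nil => intro w; simp
  | append_singleton t' b ih =>
      intro w
      calc (P (w ++ (t' ++ [b]))).ncard = (P ((w ++ t') ++ [b])).ncard := by
            rw [List.append_assoc]
        _ ≤ (P (w ++ t')).ncard + 1 := step _ _
        _ ≤ (P w).ncard + t'.length + 1 := by gcongr; exact ih w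
        _ = (P w).ncard + (t' ++ [b]).length := by simp; ring

lemma bound (w : List α) : (P w).ncard ≤ w.length + 1 := by
  have := le_bound w ([] : List α)
  simpa [P_nil, Nat.add_comm] using this

lemma prefix_rich {w u : List α} (hw : (P w).ncard = w.length + 1) (h : u <+: w) :
    (P u).ncard = u.length + 1 := by
  obtain ⟨t, rfl⟩ := h
  have h1 := le_bound t u
  have h2 := bound u
  simp only [List.length_append] at hw
  omega

lemma P_reverse (w : List α) : P w.reverse = P w := by
  ext p
  simp only [P, Set.mem_setOf_eq]
  constructor
  · rintro ⟨h, hp⟩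
    refine ⟨?_, hp⟩
    rw [← List.reverse_infix, hp]; exact h
  · rintro ⟨h, hp⟩
    refine ⟨?_, hp⟩
    rw [← List.reverse_infix, List.reverse_reverse, hp]; exact h

lemma suffix_rich {w u : List α} (hw : (P w).ncard = w.length + 1) (h : u <:+ w) :
    (P u).ncard = u.length + 1 := by
  have h' : u.reverse <+: w.reverse := by rw [List.reverse_prefix]; exact h
  have hw' : (P w.reverse).ncard = w.reverse.length + 1 := by
    rw [P_reverse, List.length_reverse]; exact hw
  have := prefix_rich hw' h'
  rw [P_reverse, List.length_reverse] at this
  exact this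

end RichAux

/-- every factor of a rich word is rich. -/
theorem stmt15 {α : Type*} : ∀ w : List α,
    {p : List α | p <:+: w ∧ p.reverse = p}.ncard = w.length + 1 →
    ∀ v : List α, v <:+: w →
      {p : List α | p <:+: v ∧ p.reverse = p}.ncard = v.length + 1 := by
  intro w hw v hv
  obtain ⟨t, hvt, htw⟩ := List.infix_iff_prefix_suffix.mp hv
  exact RichAux.prefix_rich (RichAux.suffix_rich hw htw) hvt
end
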